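/- Let L be a linear operator on a finite-dimensional real or complex vector space V = P ⊕ C with projection Δ onto P. Then Δ ∘ exp(tL) ∘ Δ⊥ ∘ exp(τL) ∘ Δ = 0 for all t, τ ≥ 0 if and only if Δ ∘ L^n ∘ Δ⊥ ∘ L^{n'} ∘ Δ = 0 for all n, n' ∈ ℕ. -/

import Mathlib

set_option maxHeartbeats 1000000
set_option synthInstance.maxHeartbeats 1000000

open scoped Nat

open NormedSpace in
/-- If `A * exp(τL) * B = 0` for all `τ ≥ 0`, then `A * L^n * B = 0` for all `n`. -/
private lemma ncgd_key (d : ℕ)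
    (L A B : EuclideanSpace ℂ (Fin d) →L[ℂ] EuclideanSpace ℂ (Fin d))
    (h : ∀ τ : ℝ, 0 ≤ τ → A * NormedSpace.exp (τ • L) * B = 0) :
    ∀ n : ℕ, A * L ^ n * B = 0 := by
  have hR : ∀ τ : ℝ, exp (τ • L) = exp (τ • L) := fun τ => by
    rfl
  have H : ∀ n : ℕ, ∀ τ : ℝ, 0 ≤ τ → A * (exp (τ • L) * L ^ n) * B = 0 := by
    intro n
    induction n with
    | zero =>
      intro τ hτ
      simpa [hR τ, mul_assoc] using h τ hτ
    | succ n ih =>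
      -- the function `f` below has derivative `g`
      set g : ℝ → _ := fun τ => A * (exp (τ • L) * L ^ (n + 1)) * B with hg
      have hder : ∀ τ : ℝ,
          HasDerivAt (fun u : ℝ => A * (exp (u • L) * L ^ n) * B) (g τ) τ := by
        intro τ
        have h1 := ((hasDerivAt_exp_smul_const L τ).mul_const (L ^ n)).const_mul A
        have h2 := h1.mul_const B
        refine h2.congr_deriv ?_
        show _ = A * (exp (τ • L) * L ^ (n + 1)) * B
        rw [pow_succ']
        simp only [mul_assoc]
      -- `g` vanishes on `(0, ∞)` since the function is constant there
      have hzero : ∀ τ : ℝ, 0 < τ → g τ = 0 := by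
        intro τ hτ
        have heq : (fun u : ℝ => A * (exp (u • L) * L ^ n) * B) =ᶠ[nhds τ]
            (fun _ => 0) := by
          filter_upwards [Ioi_mem_nhds hτ] with u hu
          exact ih u (le_of_lt hu)
        have h0 : HasDerivAt (fun _ : ℝ => (0 : _)) (g τ) τ :=
          (hder τ).congr_of_eventuallyEq heq.symm
        exact h0.unique (hasDerivAt_const τ 0)
      -- `g` is continuous, hence vanishes on `[0, ∞)` too
      have hcont : Continuous g := by
        apply Continuous.mul (Continuous.mul continuous_const ?_) continuous_const
        exact (continuous_iff_continuousAt.2 fun u =>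
          (hasDerivAt_exp_smul_const L u).continuousAt).mul continuous_const
      intro τ hτ
      have heqOn : Set.EqOn g 0 (closure (Set.Ioi (0 : ℝ))) :=
        Set.EqOn.closure (fun x hx => hzero x hx) hcont continuous_const
      have := heqOn (by rw [closure_Ioi]; exact hτ)
      simpa using this
  intro n
  have hthis := H n 0 le_rfl
  have h0 : (0 : ℝ) • L = 0 := by ext v; simp
  rw [h0, NormedSpace.exp_zero, one_mul] at hthis
  exact hthis

/-- `Δ exp(tL) Δ⊥ exp(τL) Δ = 0` for all `t, τ ≥ 0` iff
`Δ L^n Δ⊥ L^{n'} Δ = 0` for all `n, n' ∈ ℕ`. -/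
theorem ncgd_exp_iff_powers (d : ℕ)
    (L Δ : EuclideanSpace ℂ (Fin d) →L[ℂ] EuclideanSpace ℂ (Fin d)) (hΔ : Δ * Δ = Δ) :
    (∀ t τ : ℝ, 0 ≤ t → 0 ≤ τ →
      Δ * NormedSpace.exp (t • L) * (1 - Δ) * NormedSpace.exp (τ • L) * Δ = 0) ↔
    (∀ n n' : ℕ, Δ * L ^ n * (1 - Δ) * L ^ n' * Δ = 0) := by
  constructor
  · intro h n n'
    -- first remove the right exponential
    have h1 : ∀ t : ℝ, 0 ≤ t → ∀ m : ℕ,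
        Δ * NormedSpace.exp (t • L) * (1 - Δ) * L ^ m * Δ = 0 := by
      intro t ht m
      exact ncgd_key d L (Δ * NormedSpace.exp (t • L) * (1 - Δ)) Δ
        (fun τ hτ => h t τ ht hτ) m
    -- then remove the left exponential
    have h2 : ∀ τ : ℝ, 0 ≤ τ →
        Δ * NormedSpace.exp (τ • L) * ((1 - Δ) * L ^ n' * Δ) = 0 := by
      intro τ hτ
      have := h1 τ hτ n'
      simpa [mul_assoc] using this
    have := ncgd_key d L Δ ((1 - Δ) * L ^ n' * Δ) h2 n
    simpa [mul_assoc] using this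
  · intro h t τ ht hτ
    -- multiplying the exponential series termwise
    have key2 : ∀ (A B x : EuclideanSpace ℂ (Fin d) →L[ℂ] EuclideanSpace ℂ (Fin d)),
        (∀ m : ℕ, A * x ^ m * B = 0) → A * NormedSpace.exp x * B = 0 := by
      intro A B x hx
      rw [NormedSpace.exp_eq_tsum ℂ]
      have hs := NormedSpace.expSeries_summable' (𝕂 := ℂ) x
      rw [← hs.tsum_mul_left A, ← (hs.mul_left A).tsum_mul_right B]
      have hterm : ∀ m : ℕ, A * (((m ! : ℂ))⁻¹ • x ^ m) * B = 0 := by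
        intro m
        rw [mul_smul_comm, smul_mul_assoc, hx m]; ext v; simp
      simp only [hterm]
      exact tsum_zero
    apply key2
    intro m
    have inner : Δ * NormedSpace.exp (t • L) * ((1 - Δ) * (τ • L) ^ m * Δ) = 0 := by
      apply key2
      intro k
      have hnk := h k m
      rw [show Δ * (t • L) ^ k * ((1 - Δ) * (τ • L) ^ m * Δ) =
          (t ^ k * τ ^ m) • (Δ * L ^ k * (1 - Δ) * L ^ m * Δ) by
        have : IsScalarTower ℝ (EuclideanSpace ℂ (Fin d) →L[ℂ] EuclideanSpace ℂ (Fin d)) (EuclideanSpace ℂ (Fin d) →L[ℂ] EuclideanSpace ℂ (Fin d)) := ⟨fun a x y => ContinuousLinearMap.ext fun v => rfl⟩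
        have : SMulCommClass ℝ (EuclideanSpace ℂ (Fin d) →L[ℂ] EuclideanSpace ℂ (Fin d)) (EuclideanSpace ℂ (Fin d) →L[ℂ] EuclideanSpace ℂ (Fin d)) := ⟨fun a x y => ContinuousLinearMap.ext fun v => by simp⟩
        rw [smul_pow, smul_pow]
        simp [smul_mul_assoc, mul_smul_comm, mul_assoc, smul_smul, mul_comm]]
      rw [hnk]; ext v; simp
    rw [show Δ * NormedSpace.exp (t • L) * (1 - Δ) * (τ • L) ^ m * Δ =
        Δ * NormedSpace.exp (t • L) * ((1 - Δ) * (τ • L) ^ m * Δ) by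
      simp [mul_assoc]]
    exact inner
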